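/- arXiv:1801.07191 — 3 statements merged into one kernel-verified Lean document; each statement's English description precedes it below -/
import Mathlib

section
/- Let X be a pre-Riesz space with vector lattice cover (Y, i), and let S ⊆ X₊ be non-empty. Then the ideal 𝓘_{i(S)} generated by i(S) in Y satisfies i⁻¹(𝓘_{i(S)}) = 𝓘_S, and 𝓘_{i(S)} is the smallest ideal J of Y with i⁻¹(J) = 𝓘_S. -/
open Set

section Defs

variable {Z : Type*} [AddCommGroup Z] [PartialOrder Z] [Module ℝ Z]

/-- Set of common upper bounds of `x` and `-x`. -/
def pmUB (x : Z) : Set Z := upperBounds {x, -x}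

/-- Disjointness in an ordered vector space: `{±(x+y)}ᵘ = {±(x−y)}ᵘ`. -/
def Disj (x y : Z) : Prop :=
  upperBounds {x + y, -(x + y)} = upperBounds {x - y, -(x - y)}

/-- Disjoint complement of a set. -/
def dcomp (M : Set Z) : Set Z := {x : Z | ∀ y ∈ M, Disj x y}

/-- `D` is a linear subspace. -/
def IsSubsp (D : Set Z) : Prop :=
  (0 : Z) ∈ D ∧ (∀ x ∈ D, ∀ y ∈ D, x + y ∈ D) ∧ ∀ (r : ℝ), ∀ x ∈ D, r • x ∈ D

/-- A band is a linear subspace `B` with `Bᵈᵈ = B`. -/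
def IsBand (B : Set Z) : Prop := IsSubsp B ∧ dcomp (dcomp B) = B

/-- `M` is solid: `{±y}ᵘ ⊆ {±x}ᵘ` with `y ∈ M` implies `x ∈ M`. -/
def IsSolid (M : Set Z) : Prop := ∀ x : Z, ∀ y ∈ M, pmUB y ⊆ pmUB x → x ∈ M

/-- An ideal is a solid linear subspace. -/
def IsIdeal (I : Set Z) : Prop := IsSubsp I ∧ IsSolid I

/-- The ideal generated by `S`. -/
def idealGen (S : Set Z) : Set Z := ⋂₀ {I : Set Z | IsIdeal I ∧ S ⊆ I}

/-- The band generated by `S`. -/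
def bandGen (S : Set Z) : Set Z := ⋂₀ {B : Set Z | IsBand B ∧ S ⊆ B}

/-- A subset is directed if any two elements have a common upper bound in it. -/
def IsDirectedSet (D : Set Z) : Prop := ∀ x ∈ D, ∀ y ∈ D, ∃ z ∈ D, x ≤ z ∧ y ≤ z

/-- `D` is order dense in `E` (infima taken within `E`): every `y ∈ E` is the
infimum, computed in `E`, of `{w ∈ D | y ≤ w}`. -/
def OrderDenseIn (D E : Set Z) : Prop :=
  ∀ y ∈ E, y ∈ lowerBounds {w : Z | w ∈ D ∧ y ≤ w} ∧
    ∀ z ∈ E, z ∈ lowerBounds {w : Z | w ∈ D ∧ y ≤ w} → z ≤ y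

/-- `D` is majorizing in `E`. -/
def MajorizingIn (D E : Set Z) : Prop := ∀ y ∈ E, ∃ d ∈ D, y ≤ d

end Defs

section Aux

variable {Z : Type*} [AddCommGroup Z] [PartialOrder Z] [Module ℝ Z]

omit [Module ℝ Z] in
lemma mem_pmUB {x u : Z} : u ∈ pmUB x ↔ x ≤ u ∧ -x ≤ u := by
  simp [pmUB, upperBounds]

lemma isIdeal_idealGen (S : Set Z) : IsIdeal (idealGen S) := by
  refine ⟨⟨?_, ?_, ?_⟩, ?_⟩
  · intro I hI; exact hI.1.1.1
  · intro a ha b hb I hI; exact hI.1.1.2.1 a (ha I hI) b (hb I hI)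
  · intro r a ha I hI; exact hI.1.1.2.2 r a (ha I hI)
  · intro a b hb hsub I hI; exact hI.1.2 a b (hb I hI) hsub

lemma subset_idealGen (S : Set Z) : S ⊆ idealGen S := by
  intro s hs I hI; exact hI.2 hs

lemma idealGen_min {S J : Set Z} (hJ : IsIdeal J) (hSJ : S ⊆ J) : idealGen S ⊆ J :=
  Set.sInter_subset_of_mem ⟨hJ, hSJ⟩

end Aux

/-- For non-empty S ⊆ X₊, the ideal generated by i(S) in Y is the smallest
extension ideal of the ideal generated by S in X. -/
theorem stmt_8 {X Y : Type*} [AddCommGroup X] [PartialOrder X] [CovariantClass X X (· + ·) (· ≤ ·)] [Module ℝ X] [PosSMulMono ℝ X] [AddCommGroup Y] [Lattice Y] [CovariantClass Y Y (· + ·) (· ≤ ·)] [Module ℝ Y] [PosSMulMono ℝ Y]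
    (i : X →ₗ[ℝ] Y) (hbi : ∀ x : X, 0 ≤ i x ↔ 0 ≤ x)
    (hdense : ∀ y : Y, IsGLB {z : Y | z ∈ Set.range i ∧ y ≤ z} y)
    (S : Set X) (hne : S.Nonempty) (hpos : ∀ s ∈ S, (0 : X) ≤ s) :
    i ⁻¹' idealGen (i '' S) = idealGen S ∧
      ∀ J : Set Y, IsIdeal J → i ⁻¹' J = idealGen S → idealGen (i '' S) ⊆ J := by
  -- order reflection
  have hrefl : ∀ a b : X, i a ≤ i b ↔ a ≤ b := by
    intro a b
    rw [← sub_nonneg, ← sub_nonneg (b := a), ← map_sub, hbi]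
  -- key: pmUB transfer along i
  have hkey : ∀ a b : X, pmUB a ⊆ pmUB b → pmUB (i a) ⊆ pmUB (i b) := by
    intro a b hab u hu
    rw [mem_pmUB] at hu
    have hlb : ∀ c : X, i b ≤ i c ∨ -i b ≤ i c → True := fun _ _ => trivial
    have glb := hdense u
    have hb1 : i b ∈ lowerBounds {z : Y | z ∈ Set.range i ∧ u ≤ z} := by
      rintro z ⟨⟨w, rfl⟩, huz⟩
      have h1 : a ≤ w := (hrefl a w).1 (hu.1.trans huz)
      have h2 : -a ≤ w := by
        have : i (-a) ≤ i w := by rw [map_neg]; exact hu.2.trans huz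
        exact (hrefl (-a) w).1 this
      have hw : w ∈ pmUB b := hab (mem_pmUB.2 ⟨h1, h2⟩)
      exact (hrefl b w).2 (mem_pmUB.1 hw).1
    have hb2 : -i b ∈ lowerBounds {z : Y | z ∈ Set.range i ∧ u ≤ z} := by
      rintro z ⟨⟨w, rfl⟩, huz⟩
      have h1 : a ≤ w := (hrefl a w).1 (hu.1.trans huz)
      have h2 : -a ≤ w := by
        have : i (-a) ≤ i w := by rw [map_neg]; exact hu.2.trans huz
        exact (hrefl (-a) w).1 this
      have hw : w ∈ pmUB b := hab (mem_pmUB.2 ⟨h1, h2⟩)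
      rw [← map_neg]
      exact (hrefl (-b) w).2 (mem_pmUB.1 hw).2
    exact mem_pmUB.2 ⟨glb.2 hb1, glb.2 hb2⟩
  -- the auxiliary ideal J₀ in Y
  set J₀ : Set Y := {y : Y | ∃ x ∈ idealGen S, 0 ≤ x ∧ y ≤ i x ∧ -y ≤ i x} with hJ₀def
  have hIS : IsIdeal (idealGen S) := isIdeal_idealGen S
  have hIiS : IsIdeal (idealGen (i '' S)) := isIdeal_idealGen (i '' S)
  obtain ⟨s₀, hs₀⟩ := hne
  have hJ₀ideal : IsIdeal J₀ := by
    refine ⟨⟨?_, ?_, ?_⟩, ?_⟩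
    · exact ⟨s₀, subset_idealGen S hs₀, hpos s₀ hs₀, by
        simpa using (hbi s₀).2 (hpos s₀ hs₀), by
        simpa using (hbi s₀).2 (hpos s₀ hs₀)⟩
    · rintro y₁ ⟨x₁, hx₁, hx₁p, h₁, h₁'⟩ y₂ ⟨x₂, hx₂, hx₂p, h₂, h₂'⟩
      refine ⟨x₁ + x₂, hIS.1.2.1 x₁ hx₁ x₂ hx₂, add_nonneg hx₁p hx₂p, ?_, ?_⟩
      · rw [map_add]; exact add_le_add h₁ h₂
      · rw [map_add, neg_add]; exact add_le_add h₁' h₂'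
    · rintro r y ⟨x, hx, hxp, h, h'⟩
      refine ⟨|r| • x, hIS.1.2.2 |r| x hx, smul_nonneg (abs_nonneg r) hxp, ?_, ?_⟩
      · rw [map_smul]
        rcases le_or_gt 0 r with hr | hr
        · rw [abs_of_nonneg hr]; exact smul_le_smul_of_nonneg_left h hr
        · rw [abs_of_neg hr]
          have : r • y = (-r) • (-y) := by rw [neg_smul, smul_neg, neg_neg]
          rw [this]
          exact smul_le_smul_of_nonneg_left h' (by linarith)
      · rw [map_smul, ← neg_smul]
        rcases le_or_gt 0 r with hr | hr
        · rw [abs_of_nonneg hr]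
          have : (-r) • y = r • (-y) := by rw [neg_smul, smul_neg]
          rw [this]
          exact smul_le_smul_of_nonneg_left h' hr
        · rw [abs_of_neg hr]
          exact smul_le_smul_of_nonneg_left h (by linarith)
    · rintro y' y ⟨x, hx, hxp, h, h'⟩ hsub
      have : i x ∈ pmUB y' := hsub (mem_pmUB.2 ⟨h, h'⟩)
      exact ⟨x, hx, hxp, (mem_pmUB.1 this).1, (mem_pmUB.1 this).2⟩
  have hSJ₀ : i '' S ⊆ J₀ := by
    rintro _ ⟨s, hs, rfl⟩
    exact ⟨s, subset_idealGen S hs, hpos s hs, le_refl _, by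
      have h0 : (0:Y) ≤ i s := (hbi s).2 (hpos s hs)
      have h1 : -i s ≤ 0 := by simpa using add_le_add_left h0 (-i s)
      calc -i s ≤ 0 := h1
        _ ≤ i s := h0⟩
  have hmain : i ⁻¹' idealGen (i '' S) = idealGen S := by
    apply Set.Subset.antisymm
    · intro x hx
      have hxJ₀ : i x ∈ J₀ := idealGen_min hJ₀ideal hSJ₀ hx
      obtain ⟨x₀, hx₀, hx₀p, h1, h2⟩ := hxJ₀
      have hle : x ≤ x₀ := (hrefl x x₀).1 h1
      have hle' : -x ≤ x₀ := (hrefl (-x) x₀).1 (by rw [map_neg]; exact h2)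
      refine hIS.2 x x₀ hx₀ ?_
      intro u hu
      rw [mem_pmUB] at hu ⊢
      exact ⟨hle.trans hu.1, hle'.trans hu.1⟩
    · -- i ⁻¹' idealGen (i '' S) is an ideal containing S
      have hpreIdeal : IsIdeal (i ⁻¹' idealGen (i '' S)) := by
        refine ⟨⟨?_, ?_, ?_⟩, ?_⟩
        · simp only [Set.mem_preimage, map_zero]; exact hIiS.1.1
        · intro a ha b hb
          simp only [Set.mem_preimage, map_add]; exact hIiS.1.2.1 _ ha _ hb
        · intro r a ha
          simp only [Set.mem_preimage, map_smul]; exact hIiS.1.2.2 r _ ha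
        · intro a b hb hsub
          exact hIiS.2 (i a) (i b) hb (hkey b a hsub)
      apply idealGen_min hpreIdeal
      intro s hs
      exact subset_idealGen (i '' S) ⟨s, hs, rfl⟩
  refine ⟨hmain, ?_⟩
  intro J hJ hJeq
  apply idealGen_min hJ
  rintro _ ⟨s, hs, rfl⟩
  have : s ∈ i ⁻¹' J := hJeq ▸ subset_idealGen S hs
  exact this
end

section
/- Let X be an Archimedean pervasive pre-Riesz space and S ⊆ X₊ non-empty such that sup S exists in X. Then sup S ∈ Sᵈᵈ, i.e., sup S lies in the band generated by S. -/
open Set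

section Aux

variable {Y : Type*} [AddCommGroup Y] [Lattice Y] [CovariantClass Y Y (· + ·) (· ≤ ·)]

lemma abs_expand (a : Y) : |a| = a ⊔ -a := rfl

lemma inf_neg_self' (b : Y) : b ⊓ -b = -|b| := by
  rw [abs_expand, neg_sup, neg_neg, inf_comm]

/-- `|a+b| ⊔ |a-b| = |a| + |b|` in any lattice-ordered abelian group. -/
lemma aux_sup_abs (a b : Y) : |a + b| ⊔ |a - b| = |a| + |b| := by
  apply le_antisymm
  · refine sup_le (abs_add_le a b) ?_
    have := abs_add_le a (-b)
    rwa [abs_neg, ← sub_eq_add_neg] at this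
  · rw [abs_expand a, abs_expand b, add_sup, sup_add, sup_add]
    refine sup_le (sup_le ?_ ?_) (sup_le ?_ ?_)
    · exact le_sup_of_le_left (le_abs_self _)
    · have e : -a + b = -(a - b) := by abel
      rw [e]; exact le_sup_of_le_right (neg_le_abs _)
    · have e : a + -b = a - b := by abel
      rw [e]; exact le_sup_of_le_right (le_abs_self _)
    · have e : -a + -b = -(a + b) := by abel
      rw [e]; exact le_sup_of_le_left (neg_le_abs _)

/-- `|a+b| ⊓ |a-b| = ||a| - |b||` in any lattice-ordered abelian group. -/
lemma aux_inf_abs (a b : Y) : |a + b| ⊓ |a - b| = |(|a| - |b|)| := by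
  letI : DistribLattice Y := AddCommGroup.toDistribLattice Y
  apply le_antisymm
  · rw [abs_expand (a + b), abs_expand (a - b), inf_sup_right, inf_sup_left, inf_sup_left]
    have e1 : (a + b) ⊓ (a - b) = a - |b| := by
      calc (a + b) ⊓ (a - b) = (a + b) ⊓ (a + -b) := by rw [sub_eq_add_neg]
      _ = a + (b ⊓ -b) := (add_inf _ _ _).symm
      _ = a - |b| := by rw [inf_neg_self', sub_eq_add_neg]
    have e2 : (a + b) ⊓ (-(a - b)) = b - |a| := by
      calc (a + b) ⊓ (-(a - b)) = (b + a) ⊓ (b + -a) := by rw [add_comm a b]; congr 1; abel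
      _ = b + (a ⊓ -a) := (add_inf _ _ _).symm
      _ = b - |a| := by rw [inf_neg_self', sub_eq_add_neg]
    have e3 : (-(a + b)) ⊓ (a - b) = -b - |a| := by
      calc (-(a + b)) ⊓ (a - b) = (-b + -a) ⊓ (-b + a) := by congr 1 <;> abel
      _ = -b + (-a ⊓ a) := (add_inf _ _ _).symm
      _ = -b - |a| := by rw [inf_comm (-a) a, inf_neg_self', sub_eq_add_neg]
    have e4 : (-(a + b)) ⊓ (-(a - b)) = -a - |b| := by
      calc (-(a + b)) ⊓ (-(a - b)) = (-a + -b) ⊓ (-a + b) := by congr 1 <;> abel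
      _ = -a + (-b ⊓ b) := (add_inf _ _ _).symm
      _ = -a - |b| := by rw [inf_comm (-b) b, inf_neg_self', sub_eq_add_neg]
    rw [e1, e2, e3, e4]
    have hA : a - |b| ≤ |(|a| - |b|)| :=
      (sub_le_sub_right (le_abs_self a) _).trans (le_abs_self _)
    have hA' : -a - |b| ≤ |(|a| - |b|)| :=
      (sub_le_sub_right (neg_le_abs a) _).trans (le_abs_self _)
    have hB : b - |a| ≤ |(|a| - |b|)| := by
      have h1 : b - |a| ≤ |b| - |a| := sub_le_sub_right (le_abs_self b) _
      have h2 : |b| - |a| = -(|a| - |b|) := by abel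
      exact h1.trans (h2 ▸ neg_le_abs _)
    have hB' : -b - |a| ≤ |(|a| - |b|)| := by
      have h1 : -b - |a| ≤ |b| - |a| := sub_le_sub_right (neg_le_abs b) _
      have h2 : |b| - |a| = -(|a| - |b|) := by abel
      exact h1.trans (h2 ▸ neg_le_abs _)
    exact sup_le (sup_le hA hB) (sup_le hB' hA')
  · refine le_inf ?_ (abs_abs_sub_abs_le a b)
    have := abs_abs_sub_abs_le a (-b)
    rwa [abs_neg, sub_neg_eq_add] at this

/-- Disjointness characterization in a lattice-ordered real vector space. -/
lemma aux_abs_eq_iff [Module ℝ Y] (a b : Y) : |a + b| = |a - b| ↔ |a| ⊓ |b| = 0 := by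
  constructor
  · intro h
    have hsum : |a| + |b| = |a + b| := by rw [← aux_sup_abs, h, sup_idem]
    have hinf : |(|a| - |b|)| = |a + b| := by rw [← aux_inf_abs a b, h, inf_idem]
    have h2 : |a| ⊓ |b| + |a| ⊓ |b| = 0 := by
      have := two_nsmul_inf_eq_add_sub_abs_sub |a| |b|
      rw [two_nsmul, abs_sub_comm, hinf, hsum, sub_self] at this
      exact this
    have h3 : (2 : ℝ) • (|a| ⊓ |b|) = 0 := by rw [two_smul]; exact h2
    have := congrArg (fun z => ((2 : ℝ)⁻¹) • z) h3
    simpa [smul_smul] using this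
  · intro h
    have hsum : |a| + |b| = |a| ⊔ |b| := by rw [← inf_add_sup, h, zero_add]
    have habs : |(|a| - |b|)| = |a| ⊔ |b| := by
      rw [abs_sub_comm, ← sup_sub_inf_eq_abs_sub, h, sub_zero]
    have hs : |a + b| ⊔ |a - b| = |a| ⊔ |b| := by rw [aux_sup_abs, hsum]
    have hi : |a + b| ⊓ |a - b| = |a| ⊔ |b| := by rw [aux_inf_abs, habs]
    have h1 : |a + b| ≤ |a - b| := le_sup_left.trans (hs.trans hi.symm).le |>.trans inf_le_right
    have h2 : |a - b| ≤ |a + b| := le_sup_right.trans (hs.trans hi.symm).le |>.trans inf_le_left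
    exact le_antisymm h1 h2

end Aux

section Emb

variable {X Y : Type*} [AddCommGroup X] [PartialOrder X]
  [CovariantClass X X (· + ·) (· ≤ ·)] [Module ℝ X]
  [AddCommGroup Y] [Lattice Y] [CovariantClass Y Y (· + ·) (· ≤ ·)] [Module ℝ Y]
  (i : X →ₗ[ℝ] Y) (hbi : ∀ x : X, 0 ≤ i x ↔ 0 ≤ x)

include hbi

lemma aux_le_iff (v w : X) : v ≤ w ↔ i v ≤ i w := by
  rw [← sub_nonneg, ← sub_nonneg (b := i v), ← map_sub, hbi]

lemma aux_ub_iff (a u : X) : u ∈ upperBounds {a, -a} ↔ |i a| ≤ i u := by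
  have h : u ∈ upperBounds {a, -a} ↔ a ≤ u ∧ -a ≤ u := by
    simp [upperBounds, Set.mem_insert_iff, forall_eq_or_imp]
  rw [h, abs_le', aux_le_iff i hbi, aux_le_iff i hbi, map_neg]

lemma aux_disj_iff (hdense : ∀ y : Y, IsGLB {z : Y | z ∈ Set.range i ∧ y ≤ z} y)
    (x y : X) : Disj x y ↔ |i x + i y| = |i x - i y| := by
  rw [show |i x + i y| = |i (x + y)| by rw [map_add],
      show |i x - i y| = |i (x - y)| by rw [map_sub]]
  unfold Disj
  constructor
  · intro h
    have hset : {z : Y | z ∈ Set.range i ∧ |i (x + y)| ≤ z}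
        = {z : Y | z ∈ Set.range i ∧ |i (x - y)| ≤ z} := by
      ext z
      simp only [Set.mem_setOf_eq]
      constructor
      · rintro ⟨⟨u, rfl⟩, hz⟩
        refine ⟨⟨u, rfl⟩, ?_⟩
        rw [← aux_ub_iff i hbi, ← h, aux_ub_iff i hbi]
        exact hz
      · rintro ⟨⟨u, rfl⟩, hz⟩
        refine ⟨⟨u, rfl⟩, ?_⟩
        rw [← aux_ub_iff i hbi, h, aux_ub_iff i hbi]
        exact hz
    exact (hdense |i (x + y)|).unique (hset ▸ hdense |i (x - y)|)
  · intro h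
    ext u
    rw [aux_ub_iff i hbi, aux_ub_iff i hbi, h]

end Emb

/-- In an Archimedean pervasive pre-Riesz space, the supremum of a non-empty set
S ⊆ X₊ belongs to the band Sᵈᵈ generated by S. -/
theorem stmt_14 {X Y : Type*} [AddCommGroup X] [PartialOrder X] [CovariantClass X X (· + ·) (· ≤ ·)] [Module ℝ X] [PosSMulMono ℝ X] [AddCommGroup Y] [Lattice Y] [CovariantClass Y Y (· + ·) (· ≤ ·)] [Module ℝ Y] [PosSMulMono ℝ Y]
    (i : X →ₗ[ℝ] Y) (hbi : ∀ x : X, 0 ≤ i x ↔ 0 ≤ x)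
    (hdense : ∀ y : Y, IsGLB {z : Y | z ∈ Set.range i ∧ y ≤ z} y)
    (harch : ∀ x y : X, (∀ n : ℕ, n • x ≤ y) → x ≤ 0)
    (hperv : ∀ y : Y, 0 < y → ∃ x : X, 0 < i x ∧ i x ≤ y)
    (m : X) (S : Set X) (hne : S.Nonempty) (hpos : ∀ s ∈ S, (0 : X) ≤ s)
    (hsup : IsLUB S m) : m ∈ dcomp (dcomp S) := by
  intro y hy
  obtain ⟨s0, hs0⟩ := hne
  have hm0 : (0 : X) ≤ m := (hpos s0 hs0).trans (hsup.1 hs0)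
  have him : (0 : Y) ≤ i m := (hbi m).2 hm0
  rw [aux_disj_iff i hbi hdense, aux_abs_eq_iff, abs_of_nonneg him]
  by_contra hc
  have hcpos : 0 < i m ⊓ |i y| :=
    lt_of_le_of_ne (le_inf him (abs_nonneg _)) (Ne.symm hc)
  obtain ⟨x, hx, hxle⟩ := hperv _ hcpos
  have hxm : i x ≤ i m := hxle.trans inf_le_left
  have hxy : i x ≤ |i y| := hxle.trans inf_le_right
  have hub : m - x ∈ upperBounds S := by
    intro s hs
    have hs0' : (0 : Y) ≤ i s := (hbi s).2 (hpos s hs)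
    have hdisj : |i y| ⊓ |i s| = 0 :=
      (aux_abs_eq_iff (i y) (i s)).1 ((aux_disj_iff i hbi hdense y s).1 (hy s hs))
    rw [abs_of_nonneg hs0'] at hdisj
    have hxs : i x ⊓ i s = 0 :=
      le_antisymm (le_of_le_of_eq (inf_le_inf_right (i s) hxy) hdisj)
        (le_inf hx.le hs0')
    have hsum : i s + i x = i s ⊔ i x := by
      rw [← inf_add_sup (i s) (i x), inf_comm, hxs, zero_add]
    have hle : i (s + x) ≤ i m := by
      rw [map_add, hsum]
      exact sup_le ((aux_le_iff i hbi s m).1 (hsup.1 hs)) hxm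
    have : s + x ≤ m := (aux_le_iff i hbi _ _).2 hle
    exact le_sub_iff_add_le.2 this
  have hmle : m ≤ m - x := hsup.2 hub
  have hx0 : x ≤ 0 := (add_le_iff_nonpos_right m).1 (le_sub_iff_add_le.1 hmle)
  have : i x ≤ 0 := by
    have := (aux_le_iff i hbi x 0).1 hx0
    rwa [map_zero] at this
  exact absurd (lt_of_lt_of_le hx this) (lt_irrefl 0)
end

section
/- Let X be an ordered vector space and M ⊆ X a non-empty subset. Then the smallest solvex ideal containing M equals the solvex hull of the ideal generated by M, i.e., 𝓘_M^solv = solv(𝓘_M). -/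
open Set

section Solvex

variable {Z : Type*} [AddCommGroup Z] [PartialOrder Z] [Module ℝ Z]

/-- Solvexity of a set. -/
def IsSolvex (M : Set Z) : Prop :=
  ∀ (x : Z) (n : ℕ), 0 < n → ∀ xs : Fin n → Z, (∀ j, xs j ∈ M) →
    upperBounds {w : Z | ∃ lam eps : Fin n → ℝ,
        (∀ j, lam j ∈ Set.Ioc (0 : ℝ) 1) ∧ (∑ j, lam j) = 1 ∧
        (∀ j, eps j = 1 ∨ eps j = -1) ∧ w = ∑ j, (eps j * lam j) • xs j} ⊆
      upperBounds {x, -x} →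
    x ∈ M

/-- The solvex hull of a set. -/
def solvHull (M : Set Z) : Set Z := ⋂₀ {S : Set Z | IsSolvex S ∧ M ⊆ S}

end Solvex

section Aux
set_option linter.unusedSectionVars false

variable {X : Type*} [AddCommGroup X] [PartialOrder X] [Module ℝ X]

/-- The set of signed convex combinations of `xs`. -/
def cset {n : ℕ} (xs : Fin n → X) : Set X :=
  {w : X | ∃ lam eps : Fin n → ℝ,
      (∀ j, lam j ∈ Set.Ioc (0 : ℝ) 1) ∧ (∑ j, lam j) = 1 ∧
      (∀ j, eps j = 1 ∨ eps j = -1) ∧ w = ∑ j, (eps j * lam j) • xs j}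

lemma mem_pmub {a u : X} : u ∈ upperBounds ({a, -a} : Set X) ↔ a ≤ u ∧ -a ≤ u := by
  constructor
  · intro h
    exact ⟨h (Set.mem_insert _ _), h (Set.mem_insert_of_mem _ rfl)⟩
  · rintro ⟨h1, h2⟩ y hy
    rcases hy with rfl | hy
    · exact h1
    · rw [Set.mem_singleton_iff] at hy; subst hy; exact h2

lemma neg_mem_cset {n : ℕ} {xs : Fin n → X} {w : X} (h : w ∈ cset xs) : -w ∈ cset xs := by
  obtain ⟨lam, eps, h1, h2, h3, rfl⟩ := h
  refine ⟨lam, fun j => -eps j, h1, h2, fun j => (h3 j).elim (fun h => Or.inr (by simp [h]))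
    (fun h => Or.inl (by simp [h])), ?_⟩
  rw [← Finset.sum_neg_distrib]
  exact Finset.sum_congr rfl fun j _ => by rw [neg_mul, neg_smul]

lemma smul_mem_cset {n : ℕ} {xs : Fin n → X} {w : X} (r : ℝ) (h : w ∈ cset xs) :
    r • w ∈ cset (fun j => r • xs j) := by
  obtain ⟨lam, eps, h1, h2, h3, rfl⟩ := h
  refine ⟨lam, eps, h1, h2, h3, ?_⟩
  rw [Finset.smul_sum]
  exact Finset.sum_congr rfl fun j _ => smul_comm _ _ _

lemma solvHull_isSolvex (N : Set X) : IsSolvex (solvHull N) := by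
  intro x n hn xs hxs hub
  rw [solvHull, Set.mem_sInter]
  intro S hS
  exact hS.1 x n hn xs (fun j => Set.mem_sInter.1 (hxs j) S hS) hub

lemma subset_solvHull (N : Set X) : N ⊆ solvHull N :=
  fun _ hx => Set.mem_sInter.2 fun _ hS => hS.2 hx

lemma solvHull_subset {N S : Set X} (hS : IsSolvex S) (h : N ⊆ S) : solvHull N ⊆ S :=
  fun _ hx => Set.mem_sInter.1 hx S ⟨hS, h⟩

lemma IsSolvex.isSolid' {S : Set X} (h : IsSolvex S) : IsSolid S := by
  intro x y hy hub
  apply h x 1 one_pos (fun _ => y) (fun _ => hy)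
  intro u hu
  apply hub
  rw [pmUB, mem_pmub]
  constructor
  · exact hu ⟨fun _ => 1, fun _ => 1, fun _ => by norm_num, by simp, fun _ => Or.inl rfl, by simp⟩
  · exact hu ⟨fun _ => 1, fun _ => -1, fun _ => by norm_num, by simp, fun _ => Or.inr rfl, by simp⟩

end Aux

section Aux2
set_option linter.unusedSectionVars false

variable {X : Type*} [AddCommGroup X] [PartialOrder X]
  [CovariantClass X X (· + ·) (· ≤ ·)] [Module ℝ X] [PosSMulMono ℝ X]

lemma solvHull_smul_mem {D : Set X} (hD : IsSubsp D) (r : ℝ) {x : X}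
    (hx : x ∈ solvHull D) : r • x ∈ solvHull D := by
  rcases eq_or_ne r 0 with rfl | hr
  · rw [zero_smul]; exact subset_solvHull D hD.1
  · refine solvHull_subset (S := {z : X | r • z ∈ solvHull D}) ?_ ?_ hx
    · intro x n hn xs hxs hub
      show r • x ∈ solvHull D
      apply solvHull_isSolvex D (r • x) n hn (fun j => r • xs j) hxs
      intro u hu
      rw [mem_pmub]
      set s := |r| with hs
      have hs0 : (0 : ℝ) < s := abs_pos.2 hr
      have key : ∀ w ∈ cset xs, s • w ≤ u := by
        intro w hw
        rcases abs_cases r with ⟨he, _⟩ | ⟨he, _⟩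
        · rw [hs, he]; exact hu (smul_mem_cset r hw)
        · rw [hs, he, neg_smul, ← smul_neg]
          exact hu (smul_mem_cset r (neg_mem_cset hw))
      have hiu : s⁻¹ • u ∈ upperBounds ({x, -x} : Set X) := by
        apply hub
        intro w hw
        have h2 : s⁻¹ • (s • w) ≤ s⁻¹ • u :=
          smul_le_smul_of_nonneg_left (key w hw) (by positivity)
        rwa [inv_smul_smul₀ hs0.ne' w] at h2
      rw [mem_pmub] at hiu
      have hxle : s • x ≤ u := by
        have := smul_le_smul_of_nonneg_left hiu.1 hs0.le
        rwa [smul_inv_smul₀ hs0.ne'] at this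
      have hnxle : s • (-x) ≤ u := by
        have := smul_le_smul_of_nonneg_left hiu.2 hs0.le
        rwa [smul_inv_smul₀ hs0.ne'] at this
      have hr' : r = s ∨ r = -s := by
        rcases abs_cases r with ⟨he, _⟩ | ⟨he, _⟩
        · exact Or.inl (by rw [hs, he])
        · exact Or.inr (by rw [hs, he, neg_neg])
      rcases hr' with h | h
      · rw [h]
        exact ⟨hxle, by rw [← smul_neg]; exact hnxle⟩
      · rw [h]
        constructor
        · rw [neg_smul, ← smul_neg]; exact hnxle
        · rw [neg_smul, neg_neg]; exact hxle
    · intro z hz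
      exact subset_solvHull D (hD.2.2 r z hz)

lemma solvHull_add_mem {D : Set X} (hD : IsSubsp D) {x y : X}
    (hx : x ∈ solvHull D) (hy : y ∈ solvHull D) : x + y ∈ solvHull D := by
  have h2x : (2 : ℝ) • x ∈ solvHull D := solvHull_smul_mem hD 2 hx
  have h2y : (2 : ℝ) • y ∈ solvHull D := solvHull_smul_mem hD 2 hy
  apply solvHull_isSolvex D (x + y) 2 (by norm_num) ![(2 : ℝ) • x, (2 : ℝ) • y]
    (fun j => by fin_cases j <;> simpa)
  apply upperBounds_mono_set
  intro w hw
  rcases hw with rfl | hw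
  · exact ⟨![1/2, 1/2], ![1, 1], fun j => by fin_cases j <;> norm_num,
      by norm_num [Fin.sum_univ_two],
      fun j => by fin_cases j <;> simp,
      by norm_num [Fin.sum_univ_two, smul_smul]⟩
  · rw [Set.mem_singleton_iff] at hw; subst hw
    refine ⟨![1/2, 1/2], ![-1, -1], fun j => by fin_cases j <;> norm_num,
      by norm_num [Fin.sum_univ_two],
      fun j => by fin_cases j <;> simp,
      ?_⟩
    rw [Fin.sum_univ_two]
    norm_num [smul_smul]
    abel

lemma isIdeal_idealGen_s19 (M : Set X) : IsIdeal (idealGen M) := by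
  constructor
  · refine ⟨?_, ?_, ?_⟩
    · exact Set.mem_sInter.2 fun I hI => hI.1.1.1
    · intro a ha b hb
      exact Set.mem_sInter.2 fun I hI =>
        hI.1.1.2.1 a (Set.mem_sInter.1 ha I hI) b (Set.mem_sInter.1 hb I hI)
    · intro r a ha
      exact Set.mem_sInter.2 fun I hI => hI.1.1.2.2 r a (Set.mem_sInter.1 ha I hI)
  · intro x y hy hub
    exact Set.mem_sInter.2 fun I hI => hI.1.2 x y (Set.mem_sInter.1 hy I hI) hub

lemma subset_idealGen_s19 (M : Set X) : M ⊆ idealGen M :=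
  fun _ hx => Set.mem_sInter.2 fun _ hI => hI.2 hx

lemma idealGen_subset {M I : Set X} (hI : IsIdeal I) (hM : M ⊆ I) : idealGen M ⊆ I :=
  fun _ hx => Set.mem_sInter.1 hx I ⟨hI, hM⟩

end Aux2

/-- The solvex ideal generated by M equals the solvex hull of the ideal
generated by M. -/
theorem stmt_19 {X : Type*} [AddCommGroup X] [PartialOrder X] [CovariantClass X X (· + ·) (· ≤ ·)] [Module ℝ X] [PosSMulMono ℝ X]
    (M : Set X) (hne : M.Nonempty) :
    ⋂₀ {I : Set X | IsIdeal I ∧ IsSolvex I ∧ M ⊆ I} = solvHull (idealGen M) := by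
  have hIdeal : IsIdeal (idealGen M) := isIdeal_idealGen_s19 M
  have hsub : IsSubsp (idealGen M) := hIdeal.1
  have hHsolvex : IsSolvex (solvHull (idealGen M)) := solvHull_isSolvex _
  have hHideal : IsIdeal (solvHull (idealGen M)) :=
    ⟨⟨subset_solvHull _ hsub.1, fun a ha b hb => solvHull_add_mem hsub ha hb,
      fun r a ha => solvHull_smul_mem hsub r ha⟩, hHsolvex.isSolid'⟩
  have hMH : M ⊆ solvHull (idealGen M) := (subset_idealGen_s19 M).trans (subset_solvHull _)
  apply Set.Subset.antisymm
  · exact Set.sInter_subset_of_mem ⟨hHideal, hHsolvex, hMH⟩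
  · intro x hx
    rw [Set.mem_sInter]
    intro I hI
    obtain ⟨hI1, hI2, hI3⟩ := hI
    exact Set.mem_sInter.1 hx I ⟨hI2, idealGen_subset hI1 hI3⟩
end
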